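/- Let G be an infinite discrete group admitting an infinite normal subgroup H which is maximally almost periodic. Then G admits a free, minimal G-flow with the separated covering property. -/

import Mathlib

open Pointwise

section Defs

variable (G : Type*) [Group G]

/-- The right-shift of `G` on `G → A`: `(g • z) h = z (h * g)`. -/
instance (priority := high) shiftSMul (A : Type*) : SMul G (G → A) :=
  ⟨fun g z h => z (h * g)⟩

/-- The right-shift action of `G` on `G → A` is a `G`-action (the Bernoulli flow when
`A = Bool`). -/
instance shiftMulAction (A : Type*) : MulAction G (G → A) where
  one_smul z := funext fun h => by show z (h * 1) = z h; rw [mul_one]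
  mul_smul g₁ g₂ z := funext fun h => by
    show z (h * (g₁ * g₂)) = z (h * g₁ * g₂)
    rw [mul_assoc]

/-- `S ⊆ G` is `D`-separated if `Dg ∩ Dh = ∅` for all distinct `g, h ∈ S`. -/
def DSeparated (D S : Set G) : Prop :=
  ∀ g ∈ S, ∀ h ∈ S, g ≠ h → Disjoint (D * ({g} : Set G)) (D * ({h} : Set G))

/-- The separated covering property for a `G`-flow `X`: for every finite `D ⊆ G`
and every nonempty open `U ⊆ X` there is a `D`-separated `S ⊆ G` with `S⁻¹U = X`. -/
def SCP (X : Type*) [TopologicalSpace X] [MulAction G X] : Prop :=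
  ∀ D : Set G, D.Finite → ∀ U : Set X, IsOpen U → U.Nonempty →
    ∃ S : Set G, DSeparated G D S ∧ ∀ x : X, ∃ s ∈ S, s • x ∈ U

/-- A `G`-flow is minimal if every orbit is dense. -/
def IsMinimalFlow (X : Type*) [TopologicalSpace X] [MulAction G X] : Prop :=
  ∀ x : X, Dense (MulAction.orbit G x)

/-- Two `G`-flows `X` and `Y` are disjoint if the only closed `G`-invariant subset of
`X × Y` projecting onto both factors is `X × Y` itself. -/
def FlowsDisjoint (X Y : Type*) [TopologicalSpace X] [TopologicalSpace Y]
    [MulAction G X] [MulAction G Y] : Prop :=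
  ∀ J : Set (X × Y), IsClosed J → (∀ (g : G), ∀ p ∈ J, g • p ∈ J) →
    Prod.fst '' J = Set.univ → Prod.snd '' J = Set.univ → J = Set.univ

end Defs

universe u v

/-- A bundled `G`-flow carrier: a type with a topology and a `G`-action. -/
structure GFlow (G : Type u) [Group G] : Type (u + 1) where
  carrier : Type u
  [topology : TopologicalSpace carrier]
  [mulAction : MulAction G carrier]

attribute [instance] GFlow.topology GFlow.mulAction

/-- A bundled compact Hausdorff topological group. -/
structure CompactGroup : Type (u + 1) where
  carrier : Type u
  [group : Group carrier]
  [topology : TopologicalSpace carrier]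
  [topGroup : IsTopologicalGroup carrier]
  [compact : CompactSpace carrier]
  [t2 : T2Space carrier]

attribute [instance] CompactGroup.group CompactGroup.topology CompactGroup.topGroup
  CompactGroup.compact CompactGroup.t2

/-- A group `H` is maximally almost periodic if it embeds (by an injective homomorphism)
into a compact Hausdorff topological group. -/
def IsMaxap (H : Type u) [Group H] : Prop :=
  ∃ (K : CompactGroup.{u}) (f : H →* K.carrier), Function.Injective f

namespace SCPAux

/-- Integer coloring used for the 3-coloring of cyclic shifts. -/
def icol (d : ℕ) (n : ℤ) : ℕ :=
  if d = 0 then (if Even n then 0 else 1)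
  else (if n % (d : ℤ) = (d : ℤ) - 1 then 2 else (if Even (n % (d : ℤ)) then 0 else 1))

lemma icol_cases (d : ℕ) (n : ℤ) : icol d n = 0 ∨ icol d n = 1 ∨ icol d n = 2 := by
  unfold icol; split_ifs <;> simp

lemma icol_ne (d : ℕ) (hd : d ≠ 1) {m n : ℤ} (h : (d : ℤ) ∣ m - (n + 1)) :
    icol d m ≠ icol d n := by
  rcases Nat.eq_zero_or_pos d with hd0 | hdpos
  · subst hd0
    have hmn : m = n + 1 := by simpa [sub_eq_zero] using h
    subst hmn
    by_cases he : Even n <;> simp [icol, Int.even_add_one, he]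
  · have hd2 : 2 ≤ d := by omega
    have hdz : (0 : ℤ) < (d : ℤ) := by exact_mod_cast hdpos
    have hdne : d ≠ 0 := by omega
    have formula : ∀ k : ℤ, icol d k =
        if k % (d : ℤ) = (d : ℤ) - 1 then 2 else if Even (k % (d : ℤ)) then 0 else 1 := by
      intro k; simp [icol, hdne]
    have hmod : m % (d : ℤ) = (n + 1) % (d : ℤ) :=
      Int.ModEq.symm (Int.modEq_iff_dvd.mpr (by simpa using h))
    have h1 : (1 : ℤ) % (d : ℤ) = 1 := Int.emod_eq_of_lt (by norm_num) (by exact_mod_cast hd2)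
    have hadd : (n + 1) % (d : ℤ) = (n % (d : ℤ) + 1) % (d : ℤ) := by
      conv_lhs => rw [Int.add_emod, h1]
    set b := n % (d : ℤ) with hb
    have hb0 : 0 ≤ b := Int.emod_nonneg n (by omega)
    have hblt : b < (d : ℤ) := Int.emod_lt_of_pos n hdz
    have hd1 : (2:ℤ) ≤ (d:ℤ) := by exact_mod_cast hd2
    by_cases hbtop : b = (d : ℤ) - 1
    · have hz : (b + 1) % (d : ℤ) = 0 := by rw [hbtop]; simp
      have hm0 : m % (d : ℤ) = 0 := by rw [hmod, hadd, hz]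
      have em : icol d m = 0 := by
        rw [formula, hm0, if_neg (by omega), if_pos (by simp)]
      have en : icol d n = 2 := by rw [formula, if_pos hbtop]
      omega
    · have hlt : b + 1 < (d : ℤ) := by omega
      have hid : (b + 1) % (d : ℤ) = b + 1 := Int.emod_eq_of_lt (by omega) hlt
      have hm : m % (d : ℤ) = b + 1 := by rw [hmod, hadd, hid]
      by_cases htop : b + 1 = (d : ℤ) - 1
      · have em : icol d m = 2 := by rw [formula, hm, if_pos htop]
        have en : icol d n = 0 ∨ icol d n = 1 := by
          rw [formula, if_neg hbtop]; by_cases hev : Even b <;> simp [hev, Int.even_or_odd]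
        omega
      · have em : icol d m = (if Even (b + 1) then 0 else 1) := by
          rw [formula, hm, if_neg htop]
        have en : icol d n = (if Even b then 0 else 1) := by
          rw [formula, if_neg hbtop]
        by_cases hev : Even b
        · rw [em, en, if_pos hev, if_neg (by simpa [Int.even_add_one] using hev)]; omega
        · rw [em, en, if_neg hev, if_pos (by simpa [Int.even_add_one] using hev)]; omega

section Coloring

variable {Q : Type*} [Group Q]

/-- Three-coloring of `Q` such that left multiplication by `q ≠ 1` changes the color. -/
lemma exists_coloring (q : Q) (hq : q ≠ 1) :
    ∃ col : Q → ℕ, (∀ x, col (q * x) ≠ col x) ∧ ∀ x, col x = 0 ∨ col x = 1 ∨ col x = 2 := by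
  classical
  let s : Setoid Q := ⟨fun x y => ∃ n : ℤ, q ^ n * x = y, by
    constructor
    · exact fun x => ⟨0, by simp⟩
    · rintro x y ⟨n, rfl⟩
      exact ⟨-n, by simp [← mul_assoc, ← zpow_add]⟩
    · rintro x y z ⟨n, rfl⟩ ⟨m, rfl⟩
      exact ⟨m + n, by simp [← mul_assoc, ← zpow_add]⟩⟩
  let rep : Q → Q := fun x => (Quotient.mk s x).out
  have hrep : ∀ x, ∃ n : ℤ, q ^ n * rep x = x := fun x => Quotient.mk_out x
  have hrepq : ∀ x, rep (q * x) = rep x := by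
    intro x
    have : Quotient.mk s (q * x) = Quotient.mk s x :=
      Quotient.sound ⟨-1, by simp [← mul_assoc, ← zpow_add_one, zpow_neg]⟩
    simp only [rep, this]
  let nf : Q → ℤ := fun x => Classical.choose (hrep x)
  have hnf : ∀ x, q ^ nf x * rep x = x := fun x => Classical.choose_spec (hrep x)
  refine ⟨fun x => icol (orderOf q) (nf x), ?_, fun x => icol_cases _ _⟩
  intro x
  have key : q ^ nf (q * x) * rep x = q ^ (nf x + 1) * rep x := by
    have h1 : q ^ nf (q * x) * rep x = q * x := by rw [← hrepq x]; exact hnf (q * x)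
    have h2 : q ^ (nf x + 1) * rep x = q * x := by
      rw [add_comm, zpow_one_add, mul_assoc, hnf x]
    rw [h1, h2]
  have hcancel : q ^ nf (q * x) = q ^ (nf x + 1) := mul_right_cancel key
  have hone : q ^ (nf (q * x) - (nf x + 1)) = 1 := by
    rw [zpow_sub, hcancel, mul_inv_cancel]
  exact icol_ne (orderOf q) (fun h1 => hq (orderOf_eq_one_iff.mp h1))
    (orderOf_dvd_iff_zpow_eq_one.mpr hone)

lemma ultrafilter_map_mul_ne (q : Q) (hq : q ≠ 1) (u : Ultrafilter Q) :
    Ultrafilter.map (fun x => q * x) u ≠ u := by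
  obtain ⟨col, hcol, hrange⟩ := exists_coloring q hq
  intro heq
  have hcover : (col ⁻¹' {0} ∪ (col ⁻¹' {1} ∪ col ⁻¹' {2})) ∈ u := by
    refine Filter.mem_of_superset Filter.univ_mem ?_
    intro x _
    rcases hrange x with h | h | h <;> simp [h]
  have : ∃ i, col ⁻¹' {i} ∈ u := by
    rcases (Ultrafilter.union_mem_iff).mp hcover with h | h
    · exact ⟨0, h⟩
    · rcases (Ultrafilter.union_mem_iff).mp h with h' | h'
      exacts [⟨1, h'⟩, ⟨2, h'⟩]
  obtain ⟨i, hi⟩ := this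
  have hpre : (fun x => q * x) ⁻¹' (col ⁻¹' {i}) ∈ u := by
    rw [← Ultrafilter.mem_map (m := fun x => q * x) (f := u), heq]; exact hi
  obtain ⟨x, hx1, hx2⟩ := Ultrafilter.nonempty_of_mem (Filter.inter_mem hi hpre)
  exact hcol x (by simpa using hx2 ▸ (by simpa using hx1) ▸ rfl)

end Coloring

section Minimal

variable {G : Type*} [Group G] {Ω : Type*} [TopologicalSpace Ω] [CompactSpace Ω]
  [MulAction G Ω] [ContinuousConstSMul G Ω]

theorem exists_minimal_closed_invariant {A : Set Ω} (hA : IsClosed A) (hne : A.Nonempty)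
    (hinv : ∀ g : G, ∀ x ∈ A, g • x ∈ A) :
    ∃ M : Set Ω, M ⊆ A ∧ IsClosed M ∧ M.Nonempty ∧ (∀ g : G, ∀ x ∈ M, g • x ∈ M) ∧
      ∀ x ∈ M, closure (MulAction.orbit G x) = M := by
  classical
  set S : Set (Set Ω) :=
    {B | B ⊆ A ∧ IsClosed B ∧ B.Nonempty ∧ ∀ g : G, ∀ x ∈ B, g • x ∈ B} with hS
  have hzorn : ∀ c ⊆ S, IsChain (· ⊆ ·) c → c.Nonempty → ∃ lb ∈ S, ∀ s ∈ c, lb ⊆ s := by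
    intro c hcS hchain hcne
    refine ⟨⋂₀ c, ⟨?_, ?_, ?_, ?_⟩, fun s hs => Set.sInter_subset_of_mem hs⟩
    · obtain ⟨t, ht⟩ := hcne
      exact subset_trans (Set.sInter_subset_of_mem ht) (hcS ht).1
    · exact isClosed_sInter fun t ht => (hcS ht).2.1
    · haveI : Nonempty c := hcne.to_subtype
      refine IsCompact.nonempty_sInter_of_directed_nonempty_isCompact_isClosed
        (fun x hx y hy => ?_)
        (fun t ht => (hcS ht).2.2.1)
        (fun t ht => ((hcS ht).2.1).isCompact)
        (fun t ht => (hcS ht).2.1)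
      rcases hchain.total hx hy with hxy | hyx
      · exact ⟨x, hx, subset_refl _, hxy⟩
      · exact ⟨y, hy, hyx, subset_refl _⟩
    · intro g x hx
      exact Set.mem_sInter.mpr fun t ht => (hcS ht).2.2.2 g x (Set.mem_sInter.mp hx t ht)
  obtain ⟨M, hMA, hMmin⟩ := zorn_superset_nonempty S hzorn A ⟨le_refl _, hA, hne, hinv⟩
  · obtain ⟨hMA', hMcl, hMne, hMinv⟩ := hMmin.prop
    refine ⟨M, hMA', hMcl, hMne, hMinv, ?_⟩
    intro x hx
    have horb : MulAction.orbit G x ⊆ M := by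
      rintro _ ⟨g, rfl⟩; exact hMinv g x hx
    have hBS : closure (MulAction.orbit G x) ∈ S := by
      refine ⟨subset_trans (closure_minimal horb hMcl) hMA', isClosed_closure,
        ⟨x, subset_closure (MulAction.mem_orbit_self x)⟩, ?_⟩
      intro g y hy
      have h1 : (g • ·) '' closure (MulAction.orbit G x) ⊆
          closure ((g • ·) '' MulAction.orbit G x) :=
        image_closure_subset_closure_image (continuous_const_smul g)
      have h2 : (g • ·) '' MulAction.orbit G x ⊆ MulAction.orbit G x := by
        rintro _ ⟨_, ⟨g', rfl⟩, rfl⟩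
        exact ⟨g * g', by simp [mul_smul]⟩
      exact closure_mono h2 (h1 ⟨y, hy, rfl⟩)
    have hsub : closure (MulAction.orbit G x) ⊆ M := closure_minimal horb hMcl
    exact Set.Subset.antisymm hsub (hMmin.2 hBS hsub)

/-- The induced action on an invariant subset. -/
def invSubAction (M : Set Ω) (hinv : ∀ g : G, ∀ x ∈ M, g • x ∈ M) : MulAction G M where
  smul g x := ⟨g • (x : Ω), hinv g x x.2⟩
  one_smul x := Subtype.ext (one_smul G (x : Ω))
  mul_smul g h x := Subtype.ext (mul_smul g h (x : Ω))

end Minimal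

section Greedy

variable {G : Type*} [Group G]

lemma exists_sep_selector (D : Set G) (hD : D.Finite) (T : Set G) (hT : T.Infinite)
    (t : Finset G) :
    ∃ σ : G → G, (∀ g ∈ t, ∃ τ ∈ T, σ g = τ * g) ∧
      ∀ g ∈ t, ∀ g' ∈ t, σ g ≠ σ g' →
        Disjoint (D * ({σ g} : Set G)) (D * ({σ g'} : Set G)) := by
  classical
  induction t using Finset.induction_on with
  | empty => exact ⟨id, by simp, by simp⟩
  | @insert a s ha ih =>
    obtain ⟨σ, hσT, hσsep⟩ := ih
    set Bad : Set G := ⋃ g' ∈ s, (D⁻¹ * D) * ({σ g'} : Set G) with hBad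
    have hBadfin : Bad.Finite :=
      Set.Finite.biUnion s.finite_toSet
        (fun i _ => ((hD.inv.mul hD).mul (Set.finite_singleton _)))
    have hfin : ({τ : G | τ * a ∈ Bad}).Finite := by
      have : {τ : G | τ * a ∈ Bad} = (fun τ => τ * a) ⁻¹' Bad := rfl
      rw [this]
      exact Set.Finite.preimage (Set.injOn_of_injective (mul_left_injective a)) hBadfin
    obtain ⟨τ, hτT, hτn⟩ := (hT.diff hfin).nonempty
    have hτbad : τ * a ∉ Bad := hτn
    refine ⟨Function.update σ a (τ * a), ?_, ?_⟩
    · intro g hg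
      rcases Finset.mem_insert.mp hg with rfl | hgs
      · exact ⟨τ, hτT, (Function.update_self _ _ _)⟩
      · rw [Function.update_of_ne (by rintro rfl; exact ha hgs) _ _]
        exact hσT g hgs
    · have hdisj : ∀ g' ∈ s, Disjoint (D * ({τ * a} : Set G)) (D * ({σ g'} : Set G)) := by
        intro g' hg'
        rw [Set.disjoint_left]
        rintro x hx1 hx2
        rw [Set.mem_mul] at hx1 hx2
        obtain ⟨d₁, hd₁, y₁, hy₁, h₁⟩ := hx1
        obtain ⟨d₂, hd₂, y₂, hy₂, h₂⟩ := hx2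
        rw [Set.mem_singleton_iff] at hy₁ hy₂
        subst hy₁; subst hy₂
        apply hτbad
        rw [hBad]
        refine Set.mem_biUnion hg' ?_
        have hda : d₁ * (τ * a) = d₂ * σ g' := h₁.trans h₂.symm
        have hx' : τ * a = (d₁⁻¹ * d₂) * σ g' := by
          calc τ * a = d₁⁻¹ * (d₁ * (τ * a)) := by rw [← mul_assoc, inv_mul_cancel, one_mul]
          _ = d₁⁻¹ * (d₂ * σ g') := by rw [hda]
          _ = (d₁⁻¹ * d₂) * σ g' := by rw [mul_assoc]
        rw [hx']
        exact Set.mul_mem_mul (Set.mul_mem_mul (Set.inv_mem_inv.mpr hd₁) hd₂) rfl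
      intro g hg g' hg' hne
      rcases Finset.mem_insert.mp hg with rfl | hgs <;>
        rcases Finset.mem_insert.mp hg' with rfl | hg's
      · exact absurd rfl hne
      · rw [Function.update_self, Function.update_of_ne (by rintro rfl; exact ha hg's) _ _]
        exact hdisj g' hg's
      · rw [Function.update_of_ne (by rintro rfl; exact ha hgs) _ _, Function.update_self]
        exact (hdisj g hgs).symm
      · rw [Function.update_of_ne (by rintro rfl; exact ha hgs) _ _,
          Function.update_of_ne (by rintro rfl; exact ha hg's) _ _] at hne ⊢
        exact hσsep g hgs g' hg's hne

end Greedy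

section UltraCont

lemma continuous_ultrafilter_map {α β : Type*} (m : α → β) :
    Continuous (fun u : Ultrafilter α => Ultrafilter.map m u) := by
  rw [show (Ultrafilter.topologicalSpace : TopologicalSpace (Ultrafilter β)) =
    TopologicalSpace.generateFrom (ultrafilterBasis β) from rfl,
    continuous_generateFrom_iff]
  rintro _ ⟨s, rfl⟩
  have : (fun u : Ultrafilter α => Ultrafilter.map m u) ⁻¹' {u | s ∈ u} =
      {u : Ultrafilter α | m ⁻¹' s ∈ u} := by
    ext u; simp [Ultrafilter.mem_map]
  rw [this]
  exact ultrafilter_isOpen_basic _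

end UltraCont

end SCPAux

/-- If an infinite discrete group `G` admits an infinite normal subgroup
`H` which is maximally almost periodic, then `G` admits a free, minimal `G`-flow with the
separated covering property. -/



theorem exists_free_minimal_SCP_flow_of_normal_maxap_subgroup
    {G : Type u} [Group G] [Infinite G]
    (H : Subgroup G) (hHnormal : H.Normal) (hHinf : (H : Set G).Infinite)
    (hHmaxap : IsMaxap (↥H)) :
    ∃ X : GFlow G,
      CompactSpace X.carrier ∧ T2Space X.carrier ∧ Nonempty X.carrier ∧
      ContinuousConstSMul G X.carrier ∧ IsMinimalFlow G X.carrier ∧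
      (∀ (g : G) (x : X.carrier), g • x = x → g = 1) ∧
      SCP G X.carrier := by
  classical
  obtain ⟨K, f, hfinj⟩ := hHmaxap
  haveI := hHnormal
  -- the ultrafilter flow of the quotient
  letI uSMul : SMul G (Ultrafilter (G ⧸ H)) :=
    ⟨fun g u => Ultrafilter.map (fun x => ((g : G ⧸ H)) * x) u⟩
  letI uMA : MulAction G (Ultrafilter (G ⧸ H)) :=
    { toSMul := uSMul
      one_smul := by
        intro u
        show Ultrafilter.map (fun x => (((1 : G) : G ⧸ H)) * x) u = u
        have h1 : (fun x : G ⧸ H => (((1 : G) : G ⧸ H)) * x) = id := by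
          funext x; simp
        rw [h1, Ultrafilter.map_id]
      mul_smul := by
        intro g₁ g₂ u
        show Ultrafilter.map (fun x => (((g₁ * g₂ : G) : G ⧸ H)) * x) u =
          Ultrafilter.map (fun x => ((g₁ : G ⧸ H)) * x)
            (Ultrafilter.map (fun x => ((g₂ : G ⧸ H)) * x) u)
        rw [Ultrafilter.map_map]
        congr 1
        funext x
        show (((g₁ * g₂ : G) : G ⧸ H)) * x = _
        simp [mul_assoc] }
  haveI uCont : ContinuousConstSMul G (Ultrafilter (G ⧸ H)) :=
    ⟨fun g => SCPAux.continuous_ultrafilter_map _⟩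
  haveI pCont : ContinuousConstSMul G (G → K.carrier) :=
    ⟨fun g => continuous_pi fun h => continuous_apply (h * g)⟩
  -- the coinduced space
  set Y : Set (G → K.carrier) :=
    {z | ∀ (h : ↥H) (x : G), z ((h : G) * x) = f h * z x} with hYdef
  have hYclosed : IsClosed Y := by
    have hY2 : Y = ⋂ (h : ↥H), ⋂ (x : G), {z : G → K.carrier | z ((h : G) * x) = f h * z x} := by
      ext z; simp [hYdef, Set.mem_iInter]
    rw [hY2]
    exact isClosed_iInter fun h => isClosed_iInter fun x =>
      isClosed_eq (continuous_apply _) (continuous_const.mul (continuous_apply _))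
  have hYinv : ∀ g : G, ∀ z ∈ Y, g • z ∈ Y := by
    intro g z hz h x
    show z ((↑h * x) * g) = f h * z (x * g)
    rw [mul_assoc]
    exact hz h (x * g)
  -- the base point of Y
  have hz₀mem : ∀ x : G, x * (((x : G ⧸ H)).out)⁻¹ ∈ H := by
    intro x
    have h1 : ((((x : G ⧸ H)).out : G) : G ⧸ H) = (x : G ⧸ H) := QuotientGroup.out_eq' _
    have h2 : x⁻¹ * ((x : G ⧸ H)).out ∈ H := (QuotientGroup.eq).mp h1.symm
    have h3 : x * (x⁻¹ * ((x : G ⧸ H)).out) * x⁻¹ ∈ H := hHnormal.conj_mem _ h2 x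
    have h4 : x * (((x : G ⧸ H)).out)⁻¹ = (x * (x⁻¹ * ((x : G ⧸ H)).out) * x⁻¹)⁻¹ := by
      group
    rw [h4]
    exact H.inv_mem h3
  have hz₀Y : (fun x : G => f ⟨x * (((x : G ⧸ H)).out)⁻¹, hz₀mem x⟩) ∈ Y := by
    intro h x
    have houtq : (((h : G) * x : G) : G ⧸ H) = (x : G ⧸ H) := by
      rw [QuotientGroup.eq]
      have := hHnormal.conj_mem _ (H.inv_mem h.2) x⁻¹
      simpa [mul_inv_rev, mul_assoc] using this
    show f ⟨((h : G) * x) * ((((h : G) * x : G) : G ⧸ H)).out⁻¹, _⟩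
        = f h * f ⟨x * (((x : G ⧸ H)).out)⁻¹, hz₀mem x⟩
    have hsub : (⟨((h : G) * x) * ((((h : G) * x : G) : G ⧸ H)).out⁻¹, hz₀mem _⟩ : ↥H)
        = h * ⟨x * (((x : G ⧸ H)).out)⁻¹, hz₀mem x⟩ := by
      apply Subtype.ext
      show ((h : G) * x) * ((((h : G) * x : G) : G ⧸ H)).out⁻¹ = (h : G) * (x * (((x : G ⧸ H)).out)⁻¹)
      rw [houtq, mul_assoc]
    rw [hsub, map_mul]
  -- the ambient flow and the minimal subflow
  set A : Set ((G → K.carrier) × Ultrafilter (G ⧸ H)) :=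
    Y ×ˢ (Set.univ : Set (Ultrafilter (G ⧸ H))) with hAdef
  have hAclosed : IsClosed A := hYclosed.prod isClosed_univ
  have hAne : A.Nonempty :=
    ⟨((fun x : G => f ⟨x * (((x : G ⧸ H)).out)⁻¹, hz₀mem x⟩), (pure (1 : G ⧸ H) : Ultrafilter (G ⧸ H))),
      Set.mem_prod.mpr ⟨hz₀Y, trivial⟩⟩
  have hAinv : ∀ g : G, ∀ p ∈ A, g • p ∈ A := by
    intro g p hp
    exact Set.mem_prod.mpr ⟨hYinv g p.1 (Set.mem_prod.mp hp).1, trivial⟩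
  obtain ⟨M, hMA, hMcl, hMne, hMinv, hMorb⟩ :=
    SCPAux.exists_minimal_closed_invariant hAclosed hAne hAinv
  letI actM : MulAction G ↥M := SCPAux.invSubAction M hMinv
  haveI cptM : CompactSpace ↥M := isCompact_iff_compactSpace.mp hMcl.isCompact
  haveI neM : Nonempty ↥M := hMne.to_subtype
  haveI contM : ContinuousConstSMul G ↥M := by
    refine ⟨fun g => ?_⟩
    exact Continuous.subtype_mk ((continuous_const_smul g).comp continuous_subtype_val) _
  -- minimality
  have hmin : IsMinimalFlow G ↥M := by
    intro p
    rw [dense_iff_closure_eq, Set.eq_univ_iff_forall]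
    intro q
    rw [closure_subtype]
    have himg : (Subtype.val '' MulAction.orbit G p) = MulAction.orbit G ((p : (G → K.carrier) × Ultrafilter (G ⧸ H))) := by
      ext y
      constructor
      · rintro ⟨_, ⟨g, rfl⟩, rfl⟩; exact ⟨g, rfl⟩
      · rintro ⟨g, rfl⟩; exact ⟨g • p, ⟨g, rfl⟩, rfl⟩
    rw [himg, hMorb _ p.2]
    exact q.2
  -- freeness
  have hfree : ∀ (g : G) (x : ↥M), g • x = x → g = 1 := by
    intro g p hgp
    have hcoe : g • (p : (G → K.carrier) × Ultrafilter (G ⧸ H))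
        = (p : (G → K.carrier) × Ultrafilter (G ⧸ H)) :=
      congrArg Subtype.val hgp
    have h1 : g • (p : (G → K.carrier) × Ultrafilter (G ⧸ H)).1
        = (p : (G → K.carrier) × Ultrafilter (G ⧸ H)).1 :=
      congrArg Prod.fst hcoe
    have h2 : g • (p : (G → K.carrier) × Ultrafilter (G ⧸ H)).2
        = (p : (G → K.carrier) × Ultrafilter (G ⧸ H)).2 :=
      congrArg Prod.snd hcoe
    have hgH : g ∈ H := by
      by_contra hgH
      have hq1 : ((g : G ⧸ H)) ≠ 1 := fun hcon => hgH ((QuotientGroup.eq_one_iff g).mp hcon)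
      exact SCPAux.ultrafilter_map_mul_ne ((g : G ⧸ H)) hq1 _ h2
    have hzY : (p : (G → K.carrier) × Ultrafilter (G ⧸ H)).1 ∈ Y := (Set.mem_prod.mp (hMA p.2)).1
    have hYg := hzY ⟨g, hgH⟩ 1
    rw [mul_one] at hYg
    have happ : (p : (G → K.carrier) × Ultrafilter (G ⧸ H)).1 (1 * g)
        = (p : (G → K.carrier) × Ultrafilter (G ⧸ H)).1 1 := congrFun h1 1
    rw [one_mul] at happ
    have hf1 : f ⟨g, hgH⟩ * (p : (G → K.carrier) × Ultrafilter (G ⧸ H)).1 1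
        = 1 * (p : (G → K.carrier) × Ultrafilter (G ⧸ H)).1 1 := by
      rw [one_mul, ← hYg, happ]
    have hfone : f ⟨g, hgH⟩ = 1 := mul_right_cancel hf1
    have hgone : (⟨g, hgH⟩ : ↥H) = 1 := hfinj (by rw [hfone, map_one])
    simpa using Subtype.ext_iff.mp hgone
  -- the conjugation homomorphism into the product group
  set c : ↥H →* (G → K.carrier) :=
    { toFun := fun h => fun x => f ⟨x * (h : G) * x⁻¹, hHnormal.conj_mem _ h.2 x⟩
      map_one' := by
        funext x
        show f ⟨x * ((1 : ↥H) : G) * x⁻¹, _⟩ = (1 : G → K.carrier) x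
        have he : (⟨x * ((1 : ↥H) : G) * x⁻¹, hHnormal.conj_mem _ (1 : ↥H).2 x⟩ : ↥H) = 1 := by
          apply Subtype.ext; push_cast; group
        rw [he, map_one]; rfl
      map_mul' := by
        intro h₁ h₂
        funext x
        show f ⟨x * ((h₁ * h₂ : ↥H) : G) * x⁻¹, _⟩ = _
        have he : (⟨x * ((h₁ * h₂ : ↥H) : G) * x⁻¹, hHnormal.conj_mem _ (h₁ * h₂).2 x⟩ : ↥H)
            = ⟨x * (h₁ : G) * x⁻¹, hHnormal.conj_mem _ h₁.2 x⟩
              * ⟨x * (h₂ : G) * x⁻¹, hHnormal.conj_mem _ h₂.2 x⟩ := by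
          apply Subtype.ext; push_cast; group
        rw [he, map_mul]; rfl } with hcdef
  have hkey : ∀ z ∈ Y, ∀ (h : ↥H), (h : G) • z = c h * z := by
    intro z hz h
    funext x
    show z (x * (h : G)) = c h x * z x
    have hx : x * (h : G) = (x * (h : G) * x⁻¹) * x := by group
    rw [hx]
    exact hz ⟨x * (h : G) * x⁻¹, hHnormal.conj_mem _ h.2 x⟩ x
  have hcinj : Function.Injective c := by
    intro h₁ h₂ he
    apply hfinj
    have happ := congrFun he 1
    have e1 : c h₁ 1 = f h₁ := by
      show f ⟨(1 : G) * (h₁ : G) * (1 : G)⁻¹, _⟩ = f h₁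
      congr 1
      apply Subtype.ext; push_cast; group
    have e2 : c h₂ 1 = f h₂ := by
      show f ⟨(1 : G) * (h₂ : G) * (1 : G)⁻¹, _⟩ = f h₂
      congr 1
      apply Subtype.ext; push_cast; group
    rw [e1, e2] at happ
    exact happ
  haveI hHinfty : Infinite ↥H := hHinf.to_subtype
  -- infinitely many small rotations
  have hsmall : ∀ Wo : Set (G → K.carrier), IsOpen Wo → (1 : G → K.carrier) ∈ Wo →
      {h : ↥H | c h ∈ Wo}.Infinite := by
    intro Wo hWo hW1
    haveI hcf : (Filter.cofinite : Filter ↥H).NeBot := Filter.cofinite_neBot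
    haveI : (Filter.map (⇑c) (Filter.cofinite : Filter ↥H)).NeBot := hcf.map _
    obtain ⟨p, hp⟩ := exists_clusterPt_of_compactSpace (Filter.map (⇑c) Filter.cofinite)
    have hacc : ∀ N ∈ nhds p, {h : ↥H | c h ∈ N}.Infinite := by
      intro N hN
      by_contra hfin
      rw [Set.not_infinite] at hfin
      have hBc : ({h : ↥H | c h ∈ N}ᶜ : Set ↥H) ∈ (Filter.cofinite : Filter ↥H) := by
        rw [Filter.mem_cofinite]; simpa using hfin
      have h2 : (⇑c) '' ({h : ↥H | c h ∈ N}ᶜ) ∈ Filter.map (⇑c) Filter.cofinite := by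
        rw [Filter.mem_map]
        exact Filter.mem_of_superset hBc (Set.subset_preimage_image _ _)
      haveI hnb : (nhds p ⊓ Filter.map (⇑c) Filter.cofinite).NeBot := hp
      have h3 : (N ∩ (⇑c) '' ({h : ↥H | c h ∈ N}ᶜ)) ∈
          (nhds p ⊓ Filter.map (⇑c) Filter.cofinite) :=
        Filter.inter_mem (Filter.mem_inf_of_left hN) (Filter.mem_inf_of_right h2)
      obtain ⟨x, hxN, hximg⟩ := Filter.nonempty_of_mem h3
      obtain ⟨h', hh', hcx⟩ := hximg
      exact hh' (by rw [Set.mem_setOf_eq, hcx]; exact hxN)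
    have hsplit : ∃ V : Set (G → K.carrier), IsOpen V ∧ (1 : G → K.carrier) ∈ V ∧
        ∀ v ∈ V, ∀ w ∈ V, v⁻¹ * w ∈ Wo := by
      have hco : Continuous (fun pq : (G → K.carrier) × (G → K.carrier) => pq.1⁻¹ * pq.2) :=
        (continuous_fst.inv).mul continuous_snd
      have hmem : ((1 : G → K.carrier), (1 : G → K.carrier)) ∈
          (fun pq : (G → K.carrier) × (G → K.carrier) => pq.1⁻¹ * pq.2) ⁻¹' Wo := by
        simpa using hW1
      obtain ⟨W₁, W₂, hw1, hw2, hw3, hw4, hw5⟩ := isOpen_prod_iff.mp (hWo.preimage hco) _ _ hmem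
      exact ⟨W₁ ∩ W₂, hw1.inter hw2, ⟨hw3, hw4⟩,
        fun v hv w hw => hw5 (Set.mk_mem_prod hv.1 hw.2)⟩
    obtain ⟨V, hVo, hV1, hVW⟩ := hsplit
    have hNo : IsOpen ((fun x => p⁻¹ * x) ⁻¹' V) :=
      hVo.preimage (continuous_const.mul continuous_id)
    have hpN : p ∈ (fun x => p⁻¹ * x) ⁻¹' V := by simpa using hV1
    have hinfN := hacc _ (hNo.mem_nhds hpN)
    obtain ⟨h₀, hh₀⟩ := hinfN.nonempty
    have himg : ((fun h : ↥H => h₀⁻¹ * h) '' {h : ↥H | c h ∈ (fun x => p⁻¹ * x) ⁻¹' V})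
        ⊆ {h : ↥H | c h ∈ Wo} := by
      rintro _ ⟨h, hh, rfl⟩
      show c (h₀⁻¹ * h) ∈ Wo
      rw [map_mul, map_inv]
      have hrw : (c h₀)⁻¹ * c h = (p⁻¹ * c h₀)⁻¹ * (p⁻¹ * c h) := by group
      rw [hrw]
      exact hVW _ hh₀ _ hh
    exact Set.Infinite.mono himg
      (hinfN.image (Set.injOn_of_injective (mul_right_injective h₀⁻¹)))
  -- the separated covering property
  have hSCP : SCP G ↥M := by
    intro D hD U hUo hUne
    obtain ⟨p₀, hp₀⟩ := hUne
    obtain ⟨O, hOo, hOU⟩ := isOpen_induced_iff.mp hUo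
    have hp₀O : (p₀ : (G → K.carrier) × Ultrafilter (G ⧸ H)) ∈ O := by
      rw [← hOU] at hp₀; exact hp₀
    obtain ⟨V₁, V₂, hV₁o, hV₂o, hy₀, hu₀, hVO⟩ :=
      isOpen_prod_iff.mp hOo (p₀ : (G → K.carrier) × Ultrafilter (G ⧸ H)).1
        (p₀ : (G → K.carrier) × Ultrafilter (G ⧸ H)).2 (by rwa [Prod.mk.eta])
    have hmemW : ((1 : G → K.carrier), (p₀ : (G → K.carrier) × Ultrafilter (G ⧸ H)).1) ∈
        (fun pq : (G → K.carrier) × (G → K.carrier) => pq.1 * pq.2) ⁻¹' V₁ := by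
      simp only [Set.mem_preimage, one_mul]; exact hy₀
    obtain ⟨W, V₁', hWo, hV₁'o, hW1, hy₀', hWV⟩ :=
      isOpen_prod_iff.mp (hV₁o.preimage continuous_mul) _ _ hmemW
    have hWmul : ∀ w ∈ W, ∀ v ∈ V₁', w * v ∈ V₁ := fun w hw v hv => hWV (Set.mk_mem_prod hw hv)
    have hTinf : ({h : ↥H | c h ∈ W}).Infinite := hsmall W hWo hW1
    have hTinf' : ((fun h : ↥H => (h : G)) '' {h : ↥H | c h ∈ W}).Infinite :=
      hTinf.image (Set.injOn_of_injective Subtype.val_injective)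
    set Og : G → Set ↥M :=
      fun g => (fun p : ↥M => ((g • p : ↥M) : (G → K.carrier) × Ultrafilter (G ⧸ H)))
        ⁻¹' (V₁' ×ˢ V₂) with hOgdef
    have hOgo : ∀ g, IsOpen (Og g) := fun g =>
      (hV₁'o.prod hV₂o).preimage (continuous_subtype_val.comp (continuous_const_smul g))
    have hcov : (Set.univ : Set ↥M) ⊆ ⋃ g : G, Og g := by
      intro p _
      have hOne : ((Subtype.val : ↥M → _) ⁻¹' (V₁' ×ˢ V₂)).Nonempty :=
        ⟨p₀, Set.mem_prod.mpr ⟨hy₀', hu₀⟩⟩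
      obtain ⟨x, hxorb, hxV⟩ := (hmin p).exists_mem_open
        ((hV₁'o.prod hV₂o).preimage continuous_subtype_val) hOne
      obtain ⟨g, rfl⟩ := hxorb
      exact Set.mem_iUnion.mpr ⟨g, hxV⟩
    obtain ⟨t, ht⟩ := IsCompact.elim_finite_subcover isCompact_univ Og hOgo hcov
    obtain ⟨σ, hσT, hσsep⟩ := SCPAux.exists_sep_selector D hD _ hTinf' t
    refine ⟨σ '' ↑t, ?_, ?_⟩
    · rintro x₁ ⟨g₁, hg₁, rfl⟩ x₂ ⟨g₂, hg₂, rfl⟩ hne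
      exact hσsep g₁ hg₁ g₂ hg₂ hne
    · intro p
      obtain ⟨g, hgt, hpOg⟩ := Set.mem_iUnion₂.mp (ht (Set.mem_univ p))
      refine ⟨σ g, Set.mem_image_of_mem σ hgt, ?_⟩
      obtain ⟨τ, hτ, hστ⟩ := hσT g hgt
      obtain ⟨h₀, hh₀W, rfl⟩ := hτ
      rw [← hOU]
      show ((σ g • p : ↥M) : (G → K.carrier) × Ultrafilter (G ⧸ H)) ∈ O
      have hms : σ g • p = (h₀ : G) • (g • p) := by rw [hστ, mul_smul]
      rw [hms]
      apply hVO
      have hrV : (((g • p : ↥M)) : (G → K.carrier) × Ultrafilter (G ⧸ H)) ∈ V₁' ×ˢ V₂ := hpOg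
      have hrA : (((g • p : ↥M)) : (G → K.carrier) × Ultrafilter (G ⧸ H)) ∈ A :=
        hMA (g • p : ↥M).2
      have hrY : (((g • p : ↥M)) : (G → K.carrier) × Ultrafilter (G ⧸ H)).1 ∈ Y :=
        (Set.mem_prod.mp hrA).1
      refine Set.mem_prod.mpr ⟨?_, ?_⟩
      · show ((h₀ : G) • ((g • p : ↥M) : (G → K.carrier) × Ultrafilter (G ⧸ H))).1 ∈ V₁
        have hc1 : ((h₀ : G) • ((g • p : ↥M) : (G → K.carrier) × Ultrafilter (G ⧸ H))).1
            = (h₀ : G) • ((g • p : ↥M) : (G → K.carrier) × Ultrafilter (G ⧸ H)).1 := rfl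
        rw [hc1, hkey _ hrY h₀]
        exact hWmul _ hh₀W _ (Set.mem_prod.mp hrV).1
      · show ((h₀ : G) • ((g • p : ↥M) : (G → K.carrier) × Ultrafilter (G ⧸ H))).2 ∈ V₂
        have hc2 : ((h₀ : G) • ((g • p : ↥M) : (G → K.carrier) × Ultrafilter (G ⧸ H))).2
            = ((g • p : ↥M) : (G → K.carrier) × Ultrafilter (G ⧸ H)).2 := by
          show Ultrafilter.map (fun x => ((((h₀ : G)) : G ⧸ H)) * x) _ = _
          have hq1 : (((h₀ : G)) : G ⧸ H) = 1 := (QuotientGroup.eq_one_iff _).mpr h₀.2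
          rw [hq1]
          have hid : (fun x : G ⧸ H => (1 : G ⧸ H) * x) = id := by funext x; simp
          rw [hid, Ultrafilter.map_id]
        rw [hc2]
        exact (Set.mem_prod.mp hrV).2
  exact ⟨⟨↥M⟩, cptM, inferInstance, neM, contM, hmin, hfree, hSCP⟩
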